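/- Let F be a forest on vertex set V and let e = {u,v} be an edge such that F + e is still a forest (u and v are in different trees). Given Euler tours C_u and C_v of the transformed components containing u and v, splitting C_u after a node representing u, splitting C_v after a node representing v, and concatenating: (tour-from-u) ++ [(u,v)] ++ (tour-from-v rotated to start after v) ++ [(v,u)] yields an Euler tour of the transformed component of F + e containing u and v. -/

import Mathlib

lemma walk_decomp {V : Type*} (G : SimpleGraph V) (u v : V) (hne : u ≠ v)
    (hsep : ¬ G.Reachable u v) {x y : V}
    (w : (G ⊔ SimpleGraph.fromEdgeSet {s(u, v)}).Walk x y) :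
    G.Reachable x y ∨ (G.Reachable x u ∧ G.Reachable v y) ∨
      (G.Reachable x v ∧ G.Reachable u y) := by
  induction w with
  | nil => exact Or.inl (SimpleGraph.Reachable.refl _)
  | cons h p ih =>
    rename_i a b c
    rcases h with h | h
    · rcases ih with h1 | ⟨h1, h2⟩ | ⟨h1, h2⟩
      · exact Or.inl (h.reachable.trans h1)
      · exact Or.inr (Or.inl ⟨h.reachable.trans h1, h2⟩)
      · exact Or.inr (Or.inr ⟨h.reachable.trans h1, h2⟩)
    · simp only [SimpleGraph.fromEdgeSet_adj, Set.mem_singleton_iff, Sym2.eq_iff] at h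
      rcases h.1 with ⟨rfl, rfl⟩ | ⟨rfl, rfl⟩
      · rcases ih with h1 | ⟨h1, h2⟩ | ⟨h1, h2⟩
        · exact Or.inr (Or.inl ⟨SimpleGraph.Reachable.refl _, h1⟩)
        · exact absurd (h1.symm) hsep
        · exact Or.inl h2
      · rcases ih with h1 | ⟨h1, h2⟩ | ⟨h1, h2⟩
        · exact Or.inr (Or.inr ⟨SimpleGraph.Reachable.refl _, h1⟩)
        · exact Or.inl h2
        · exact absurd h1 hsep

lemma reach_sup {V : Type*} (G : SimpleGraph V) (u v : V) (hne : u ≠ v)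
    (hsep : ¬ G.Reachable u v) (x : V) :
    (G ⊔ SimpleGraph.fromEdgeSet {s(u, v)}).Reachable u x ↔
      G.Reachable u x ∨ G.Reachable v x := by
  constructor
  · rintro ⟨w⟩
    rcases walk_decomp G u v hne hsep w with h | ⟨h1, h2⟩ | ⟨h1, h2⟩
    · exact Or.inl h
    · exact Or.inr h2
    · exact absurd h1 hsep
  · have hadj : (G ⊔ SimpleGraph.fromEdgeSet {s(u, v)}).Adj u v := by
      right
      simp [SimpleGraph.fromEdgeSet_adj, hne]
    rintro (h | h)
    · exact h.mono le_sup_left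
    · exact hadj.reachable.trans (h.mono le_sup_left)

lemma adj_sup {V : Type*} (G : SimpleGraph V) (u v : V) (hne : u ≠ v)
    (a : V × V) :
    (G ⊔ SimpleGraph.fromEdgeSet {s(u, v)}).Adj a.1 a.2 ↔
      G.Adj a.1 a.2 ∨ a = (u, v) ∨ a = (v, u) := by
  simp only [SimpleGraph.sup_adj, SimpleGraph.fromEdgeSet_adj, Set.mem_singleton_iff,
    Sym2.eq_iff, Prod.ext_iff]
  constructor
  · rintro (h | ⟨(⟨rfl, rfl⟩ | ⟨rfl, rfl⟩), h2⟩)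
    · exact Or.inl h
    · exact Or.inr (Or.inl ⟨rfl, rfl⟩)
    · exact Or.inr (Or.inr ⟨rfl, rfl⟩)
  · rintro (h | ⟨h1, h2⟩ | ⟨h1, h2⟩)
    · exact Or.inl h
    · exact Or.inr ⟨Or.inl ⟨h1, h2⟩, by subst h1 h2; exact hne⟩
    · exact Or.inr ⟨Or.inr ⟨h1, h2⟩, by subst h1 h2; exact hne.symm⟩



/-- `l` is an Euler tour of the arc multiset `arcs`: a nonempty closed walk using each
arc exactly once, where consecutive arcs chain (head of one arc = tail of the next)
and the tour closes up cyclically. -/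
def IsEulerTour {V : Type*} (arcs : Multiset (V × V)) (l : List (V × V)) : Prop :=
  l ≠ [] ∧ (↑l : Multiset (V × V)) = arcs ∧
    List.Chain' (fun a b => a.2 = b.1) l ∧
    ∀ h : l ≠ [], (l.getLast h).2 = (l.head h).1

/-- The arc multiset of the Euler-tour transformation of a graph `G`: each undirected
edge `{u,v}` is replaced by the two directed arcs `(u,v)`, `(v,u)`, and a self-loop
`(v,v)` is added at every vertex. -/
def treeArcs {V : Type*} [Fintype V] [DecidableEq V] (G : SimpleGraph V)
    [DecidableRel G.Adj] : Multiset (V × V) :=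
  (Finset.univ.filter (fun a : V × V => G.Adj a.1 a.2)).val
    + Finset.univ.val.map (fun v : V => (v, v))


/-- The arcs of the transformed multigraph lying in the connected component of `w`. -/
def componentArcs {V : Type*} [Fintype V] [DecidableEq V] (G : SimpleGraph V)
    [DecidableRel G.Adj] [DecidableRel G.Reachable] (w : V) : Multiset (V × V) :=
  (treeArcs G).filter (fun a => G.Reachable w a.1)

/-- Linking two Euler tour trees. Let `F` be a forest and `{u,v}` an edge
with `u`, `v` in different trees. Given Euler tours `A` (of `u`'s transformed component,
rotated/split so that it ends at `u`) and `B` (of `v`'s transformed component, rotated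
to start at `v`), the concatenation `A ++ [(u,v)] ++ B ++ [(v,u)]` is an Euler tour of
the transformed component of `F + {u,v}` containing `u` and `v`. -/
lemma treeArcs_sup {V : Type*} [Fintype V] [DecidableEq V] (G : SimpleGraph V)
    [DecidableRel G.Adj] (u v : V) (hne : u ≠ v) (hsep : ¬ G.Reachable u v)
    (G' : SimpleGraph V) [DecidableRel G'.Adj]
    (hG' : G' = G ⊔ SimpleGraph.fromEdgeSet {s(u, v)}) :
    treeArcs G' = (u, v) ::ₘ (v, u) ::ₘ treeArcs G := by
  have hnadjuv : ¬ G.Adj u v := fun h => hsep h.reachable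
  have hnadjvu : ¬ G.Adj v u := fun h => hsep h.symm.reachable
  have key : (Finset.univ.filter (fun a : V × V => G'.Adj a.1 a.2)).val
      = (u, v) ::ₘ (v, u) ::ₘ (Finset.univ.filter (fun a : V × V => G.Adj a.1 a.2)).val := by
    apply Multiset.ext.mpr
    intro a
    have hadj := adj_sup G u v hne a
    rw [← hG'] at hadj
    simp only [Finset.filter_val, Multiset.count_filter, Multiset.count_cons,
      Multiset.count_univ, hadj]
    by_cases h2 : a = (u, v) <;> by_cases h3 : a = (v, u) <;>
      by_cases h4 : G.Adj a.1 a.2 <;>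
      simp_all <;> omega
  unfold treeArcs
  rw [key, Multiset.cons_add, Multiset.cons_add]

theorem euler_tour_link
    {V : Type*} [Fintype V] [DecidableEq V] (G : SimpleGraph V)
    [DecidableRel G.Adj] [DecidableRel G.Reachable] (hF : G.IsAcyclic)
    (u v : V) (hne : u ≠ v) (hsep : ¬ G.Reachable u v)
    (G' : SimpleGraph V) [DecidableRel G'.Adj] [DecidableRel G'.Reachable]
    (hG' : G' = G ⊔ SimpleGraph.fromEdgeSet {s(u, v)})
    (A B : List (V × V))
    (hA : IsEulerTour (componentArcs G u) A)
    (hB : IsEulerTour (componentArcs G v) B)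
    (hAu : ∀ h : A ≠ [], (A.getLast h).2 = u)
    (hBv : ∀ h : B ≠ [], (B.head h).1 = v) :
    IsEulerTour (componentArcs G' u) (A ++ (u, v) :: (B ++ [(v, u)])) := by
  obtain ⟨hAne, hAm, hAc, hAcl⟩ := hA
  obtain ⟨hBne, hBm, hBc, hBcl⟩ := hB
  have hreach : ∀ x, G'.Reachable u x ↔ G.Reachable u x ∨ G.Reachable v x := by
    intro x; rw [hG']; exact reach_sup G u v hne hsep x
  have hGle : G ≤ G' := by rw [hG']; exact le_sup_left
  refine ⟨by simp, ?_, ?_, ?_⟩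
  · -- multiset equality
    have key : componentArcs G' u
        = componentArcs G u + ((u, v) ::ₘ (componentArcs G v + {(v, u)})) := by
      unfold componentArcs
      rw [treeArcs_sup G u v hne hsep G' hG']
      rw [Multiset.filter_cons, Multiset.filter_cons]
      have hru : G'.Reachable u u := SimpleGraph.Reachable.refl u
      have hrv : G'.Reachable u v := (hreach v).mpr (Or.inr (SimpleGraph.Reachable.refl v))
      rw [if_pos hru, if_pos hrv]
      have hsplit : (treeArcs G).filter (fun a => G'.Reachable u a.1)
          = (treeArcs G).filter (fun a => G.Reachable u a.1)
            + (treeArcs G).filter (fun a => G.Reachable v a.1) := by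
        rw [Multiset.filter_add_filter]
        have h0 : (treeArcs G).filter
            (fun a => G.Reachable u a.1 ∧ G.Reachable v a.1) = 0 := by
          rw [Multiset.filter_eq_nil]
          rintro a _ ⟨h1, h2⟩
          exact hsep (h1.trans h2.symm)
        rw [h0, add_zero]
        exact Multiset.filter_congr (fun a _ => (hreach a.1))
      rw [hsplit]
      simp only [← Multiset.singleton_add]
      abel
    rw [key, ← hAm, ← hBm]
    simp only [← Multiset.cons_coe, ← Multiset.coe_add, List.cons_append, List.append_assoc]
    rfl
  · -- chain
    refine List.isChain_append.mpr ⟨hAc, ?_, ?_⟩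
    · refine List.isChain_cons.mpr ⟨?_, ?_⟩
      · intro y hy
        rw [List.head?_append_of_ne_nil _ hBne] at hy
        rw [List.head?_eq_head hBne] at hy
        simp only [Option.mem_def, Option.some_inj] at hy
        subst hy
        exact (hBv hBne).symm
      · refine List.isChain_append.mpr ⟨hBc, List.isChain_singleton _, ?_⟩
        intro x hx y hy
        rw [List.getLast?_eq_getLast hBne] at hx
        simp only [List.head?_cons, Option.mem_def, Option.some_inj] at hx hy
        subst hx; subst hy
        exact (hBcl hBne).trans (hBv hBne)
    · intro x hx y hy
      rw [List.getLast?_eq_getLast hAne] at hx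
      simp only [List.head?_cons, Option.mem_def, Option.some_inj] at hx hy
      subst hx; subst hy
      exact hAu hAne
  · -- closure
    intro h
    have hrw : A ++ (u, v) :: (B ++ [(v, u)]) = (A ++ (u, v) :: B) ++ [(v, u)] := by
      simp
    have hlast : ((A ++ (u, v) :: (B ++ [(v, u)])).getLast h) = (v, u) := by
      rw [List.getLast_congr _ _ hrw]
      exact List.getLast_append_singleton _
    have hhead : ((A ++ (u, v) :: (B ++ [(v, u)])).head h) = A.head hAne := by
      exact List.head_append_of_ne_nil hAne
    rw [hlast, hhead]
    exact ((hAcl hAne).symm.trans (hAu hAne)).symm
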